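/- For every countable ordinal α, NPr^α(ℵ_α) holds. -/

import Mathlib

open FirstOrder Cardinal


/-- The increasing enumeration of a finite set in a linear order. -/
noncomputable def enumFun {M : Type*} [LinearOrder M] (w : Finset M) : Fin w.card → M :=
  fun i => (w.orderIsoOfFin rfl i : M)

/-- `rk(w,𝕄) ≥ 0`. -/
def rkBase (L : Language) (M : Type*) [LinearOrder M] [L.Structure M] (w : Finset M) : Prop :=
  ∀ φ : L.Formula (Fin w.card), φ.IsQF → ∀ k : Fin w.card,
    φ.Realize (enumFun w) →
      ¬ ({α : M | φ.Realize (Function.update (enumFun w) k α)}).Countable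

/-- Successor step of the splitting rank. -/
def rkSucc (L : Language) (M : Type*) [LinearOrder M] [L.Structure M]
    (IH : Finset M → Prop) (w : Finset M) : Prop :=
  ∀ φ : L.Formula (Fin w.card), φ.IsQF → ∀ k : Fin w.card,
    φ.Realize (enumFun w) →
      ∃ α : M, α ∉ w ∧ IH (insert α w) ∧ φ.Realize (Function.update (enumFun w) k α)

/-- The splitting rank relation `rk(w,𝕄) ≥ δ`. -/
noncomputable def rkGe (L : Language) (M : Type*) [LinearOrder M] [L.Structure M]
    (δ : Ordinal) : Finset M → Prop :=
  Ordinal.limitRecOn δ (rkBase L M) (fun _ IH => rkSucc L M IH)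
    (fun _ _ IH w => ∀ γ (hγ : γ < _), IH γ hγ w)

/-- `NPr^ε(λ)`: there is a model with universe of cardinality `λ` in a countable vocabulary
all of whose nonempty finite subsets `w` satisfy `1 + rk(w) ≤ ε`. -/
def NPr (ε : Ordinal) (lam : Cardinal) : Prop :=
  ∃ (M : Type) (instO : LinearOrder M) (L : FirstOrder.Language.{0, 0}) (instS : L.Structure M),
    Cardinal.mk M = lam ∧ L.card ≤ Cardinal.aleph0 ∧
    ∀ w : Finset M, w.Nonempty → ∀ δ : Ordinal, @rkGe L M instO instS δ w → 1 + δ ≤ ε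


namespace NPrPf
open Ordinal

noncomputable def cc (t : Ordinal.{0}) : Ordinal.{0} := sInf {g | t.card ≤ aleph g}

lemma cc_set_nonempty (t : Ordinal.{0}) : {g | t.card ≤ aleph g}.Nonempty := by
  obtain ⟨g, hg⟩ := Cardinal.mem_range_aleph_iff.mpr (le_sup_right : ℵ₀ ≤ t.card ⊔ ℵ₀)
  exact ⟨g, by rw [Set.mem_setOf_eq, hg]; exact le_sup_left⟩

lemma cc_le {t g : Ordinal.{0}} (h : t.card ≤ aleph g) : cc t ≤ g := csInf_le' h

lemma card_le_aleph_cc (t : Ordinal.{0}) : t.card ≤ aleph (cc t) :=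
  csInf_mem (cc_set_nonempty t)

lemma cc_lt_of_lt_ord {t g : Ordinal.{0}} (hg : 1 ≤ g) (h : t < (aleph g).ord) : cc t < g := by
  have hcard : t.card < aleph g := Cardinal.lt_ord.mp h
  rcases Ordinal.zero_or_succ_or_isSuccLimit g with h0 | ⟨g', rfl⟩ | hlim
  · subst h0; exact absurd hg (by simp)
  · have h1 : t.card ≤ aleph g' := by
      rw [aleph_succ] at hcard
      exact Order.lt_succ_iff.mp hcard
    exact Order.lt_succ_of_le (cc_le h1)
  · rw [aleph_limit hlim] at hcard
    have : Nonempty ↑(Set.Iio g) := ⟨⟨0, hlim.pos⟩⟩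
    obtain ⟨⟨g', hg'⟩, hle⟩ := (lt_ciSup_iff (Cardinal.bddAbove_range _)).mp hcard
    exact (cc_le hle.le).trans_lt hg'

/-- the level drops: anything below `ω_g` has level `< max g 1`. -/
lemma cc_lt_max {t g : Ordinal.{0}} (h : t < (aleph g).ord) : cc t < max g 1 := by
  rcases le_or_gt 1 g with h1 | h1
  · exact (cc_lt_of_lt_ord h1 h).trans_le (le_max_left _ _)
  · have hg0 : g = 0 := Ordinal.lt_one_iff_zero.mp h1
    subst hg0
    have : t.card ≤ aleph 0 := (Cardinal.lt_ord.mp h).le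
    have h0 : cc t ≤ 0 := cc_le this
    have : cc t = 0 := le_antisymm h0 zero_le
    rw [this]; exact lt_max_of_lt_right zero_lt_one

lemma cc_le_of_lt_ord {t g : Ordinal.{0}} (h : t < (aleph g).ord) : cc t ≤ g := by
  have := cc_lt_max h
  rcases le_or_gt 1 g with h1 | h1
  · rw [max_eq_left h1] at this; exact this.le
  · have hg0 : g = 0 := Ordinal.lt_one_iff_zero.mp h1
    subst hg0
    rw [max_eq_right zero_le_one] at this
    exact le_of_eq (Ordinal.lt_one_iff_zero.mp this)
    
end NPrPf

namespace NPrPf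
open Ordinal

lemma aleph_cc_le_card {t : Ordinal.{0}} (ht : ω ≤ t) : aleph (cc t) ≤ t.card := by
  have key : ∀ g < cc t, aleph g < t.card := by
    intro g hg
    have : g ∉ {g | t.card ≤ aleph g} := notMem_of_lt_csInf hg ⟨0, fun _ _ => zero_le⟩
    exact lt_of_not_ge this
  rcases Ordinal.zero_or_succ_or_isSuccLimit (cc t) with h0 | ⟨g', hs⟩ | hlim
  · rw [h0, aleph_zero]; exact Ordinal.aleph0_le_card.mpr ht
  · rw [← hs, aleph_succ, Order.succ_le_iff]
    exact key g' (hs ▸ Order.lt_succ g')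
  · rw [aleph_limit hlim]
    have : Nonempty ↑(Set.Iio (cc t)) := ⟨⟨0, hlim.pos⟩⟩
    exact ciSup_le fun ⟨g', hg'⟩ => (key g' hg').le

lemma ord_aleph_cc_le {t : Ordinal.{0}} (ht : ω ≤ t) : (aleph (cc t)).ord ≤ t :=
  Cardinal.ord_le.mpr (aleph_cc_le_card ht)

lemma emb_nonempty (t : Ordinal.{0}) :
    Nonempty (↥(Set.Iio t) ↪ ↥(Set.Iio (aleph (cc t)).ord)) := by
  rw [← Cardinal.le_def, Ordinal.mk_Iio_ordinal, Ordinal.mk_Iio_ordinal, Cardinal.card_ord]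
  exact Cardinal.lift_le.mpr (card_le_aleph_cc t)

/-- the coding injections -/
noncomputable def ee (t : Ordinal.{0}) : Ordinal.{0} → Ordinal.{0} :=
  if t < ω then id else fun ξ =>
    if hξ : ξ < t then ((Classical.choice (emb_nonempty t)) ⟨ξ, hξ⟩ : Ordinal) else 0

lemma ee_lt_ord {t ξ : Ordinal.{0}} (h : ξ < t) : ee t ξ < (aleph (cc t)).ord := by
  unfold ee
  split_ifs with ht
  · calc (ξ : Ordinal) < t := h
      _ ≤ ω := ht.le
      _ = Cardinal.ord ℵ₀ := Cardinal.ord_aleph0.symm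
      _ ≤ (aleph (cc t)).ord := Cardinal.ord_le_ord.mpr (aleph0_le_aleph _)
  · simp only [dif_pos h]
    exact ((Classical.choice (emb_nonempty t)) ⟨ξ, h⟩).2

lemma ee_lt_self {t ξ : Ordinal.{0}} (h : ξ < t) : ee t ξ < t := by
  by_cases ht : t < ω
  · unfold ee; rw [if_pos ht]; exact h
  · exact (ee_lt_ord h).trans_le (ord_aleph_cc_le (le_of_not_gt ht))

lemma ee_injOn {t : Ordinal.{0}} : Set.InjOn (ee t) (Set.Iio t) := by
  intro x hx y hy hxy
  unfold ee at hxy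
  split_ifs at hxy with ht
  · exact hxy
  · simp only [dif_pos (Set.mem_Iio.mp hx), dif_pos (Set.mem_Iio.mp hy)] at hxy
    have := (Classical.choice (emb_nonempty t)).injective (Subtype.ext hxy)
    exact congrArg Subtype.val this

end NPrPf

namespace NPrPf
open Ordinal

noncomputable def Mx (u : Finset Ordinal.{0}) : Ordinal.{0} := u.sup id

lemma le_Mx {u : Finset Ordinal.{0}} {x} (h : x ∈ u) : x ≤ Mx u := Finset.le_sup (f := id) h

lemma Mx_mem {u : Finset Ordinal.{0}} (h : u.Nonempty) : Mx u ∈ u := by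
  obtain ⟨i, hi, he⟩ := Finset.exists_mem_eq_sup u h id
  rw [Mx, he]; exact hi

lemma lt_Mx_of_ne {u : Finset Ordinal.{0}} {x} (h : x ∈ u) (hne : x ≠ Mx u) : x < Mx u :=
  (le_Mx h).lt_of_ne hne

lemma Mx_insert_of_lt {u : Finset Ordinal.{0}} {a} (h : a < Mx u) : Mx (insert a u) = Mx u := by
  rw [Mx, Finset.sup_insert]
  exact sup_eq_right.mpr h.le

lemma Mx_erase {u : Finset Ordinal.{0}} {x} (hx : x ∈ u) (hne : x ≠ Mx u) :
    Mx (u.erase x) = Mx u := by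
  refine le_antisymm (Finset.sup_mono (Finset.erase_subset x u)) ?_
  exact le_Mx (Finset.mem_erase.mpr ⟨hne.symm, Mx_mem ⟨x, hx⟩⟩)

noncomputable def nxt (u : Finset Ordinal.{0}) : Finset Ordinal.{0} :=
  (u.erase (Mx u)).image (ee (Mx u))

lemma mem_of_mem_nxt {u : Finset Ordinal.{0}} {y} (h : y ∈ nxt u) :
    ∃ x ∈ u, x < Mx u ∧ ee (Mx u) x = y := by
  obtain ⟨x, hx, rfl⟩ := Finset.mem_image.mp h
  obtain ⟨hne, hxu⟩ := Finset.mem_erase.mp hx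
  exact ⟨x, hxu, lt_Mx_of_ne hxu hne, rfl⟩

lemma nxt_lt_ord {u : Finset Ordinal.{0}} {y} (h : y ∈ nxt u) :
    y < (aleph (cc (Mx u))).ord := by
  obtain ⟨x, _, hlt, rfl⟩ := mem_of_mem_nxt h
  exact ee_lt_ord hlt

lemma nxt_lt_Mx {u : Finset Ordinal.{0}} {y} (h : y ∈ nxt u) : y < Mx u := by
  obtain ⟨x, _, hlt, rfl⟩ := mem_of_mem_nxt h
  exact ee_lt_self hlt

lemma card_nxt {u : Finset Ordinal.{0}} (h : u.Nonempty) : (nxt u).card = u.card - 1 := by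
  rw [nxt, Finset.card_image_of_injOn, Finset.card_erase_of_mem (Mx_mem h)]
  intro x hx y hy hxy
  have hx' : x < Mx u := lt_Mx_of_ne (Finset.mem_erase.mp hx).2 (Finset.mem_erase.mp hx).1
  have hy' : y < Mx u := lt_Mx_of_ne (Finset.mem_erase.mp hy).2 (Finset.mem_erase.mp hy).1
  exact ee_injOn hx' hy' hxy

lemma nxt_nonempty {u : Finset Ordinal.{0}} (h : 2 ≤ u.card) : (nxt u).Nonempty := by
  rw [← Finset.card_pos, card_nxt (Finset.card_pos.mp (by omega))]
  omega

/-- image commutes with erase for injective-on maps -/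
lemma image_erase_injOn {f : Ordinal.{0} → Ordinal.{0}} {s : Finset Ordinal.{0}}
    {T : Set Ordinal.{0}} (hs : ↑s ⊆ T) (hf : Set.InjOn f T) {x} (hx : x ∈ s) :
    (s.erase x).image f = (s.image f).erase (f x) := by
  ext z
  simp only [Finset.mem_image, Finset.mem_erase]
  constructor
  · rintro ⟨y, hy, rfl⟩
    have hyne : y ≠ x := hy.1
    have hys : y ∈ s := hy.2
    exact ⟨fun he => hyne (hf (hs hys) (hs hx) he), y, hys, rfl⟩
  · rintro ⟨hne, y, hys, rfl⟩
    exact ⟨y, ⟨fun he => hne (congrArg f he), hys⟩, rfl⟩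

lemma nxt_insert {u : Finset Ordinal.{0}} {a} (ha : a ∉ u) (hlt : a < Mx u) :
    nxt (insert a u) = insert (ee (Mx u) a) (nxt u) := by
  rw [nxt, Mx_insert_of_lt hlt, Finset.erase_insert_of_ne (ne_of_lt hlt),
    Finset.image_insert, nxt]

lemma ee_Mx_not_mem_nxt {u : Finset Ordinal.{0}} {a} (ha : a ∉ u) (hlt : a < Mx u) :
    ee (Mx u) a ∉ nxt u := by
  intro hmem
  obtain ⟨x, hxu, hxlt, hex⟩ := mem_of_mem_nxt hmem
  exact ha (ee_injOn hxlt hlt hex ▸ hxu)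

end NPrPf

namespace NPrPf
open Ordinal

noncomputable def Par (u : Finset Ordinal.{0}) (a : Ordinal.{0}) : Prop :=
  if h : u.Nonempty then a < Mx u ∧ Par (nxt u) (ee (Mx u) a) else True
termination_by u.card
decreasing_by
  rw [card_nxt h]
  have := Finset.card_pos.mpr h
  omega

noncomputable def dc (u : Finset Ordinal.{0}) (a : Ordinal.{0}) : Ordinal.{0} :=
  if h : u.Nonempty then dc (nxt u) (ee (Mx u) a) else a
termination_by u.card
decreasing_by
  rw [card_nxt h]
  have := Finset.card_pos.mpr h
  omega

noncomputable def theW (w : Finset Ordinal.{0}) : Ordinal.{0} :=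
  if h : 2 ≤ w.card then theW (nxt w) else Mx w
termination_by w.card
decreasing_by
  rw [card_nxt (Finset.card_pos.mp (by omega))]
  omega

lemma Par_empty (a : Ordinal.{0}) : Par ∅ a := by
  rw [Par]; simp

lemma Par_iff {u : Finset Ordinal.{0}} (h : u.Nonempty) (a : Ordinal.{0}) :
    Par u a ↔ a < Mx u ∧ Par (nxt u) (ee (Mx u) a) := by
  rw [Par]; simp [h]

lemma dc_empty (a : Ordinal.{0}) : dc ∅ a = a := by
  rw [dc]; simp

lemma dc_eq {u : Finset Ordinal.{0}} (h : u.Nonempty) (a : Ordinal.{0}) :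
    dc u a = dc (nxt u) (ee (Mx u) a) := by
  rw [dc]; simp [h]

lemma theW_small {w : Finset Ordinal.{0}} (h : ¬ 2 ≤ w.card) : theW w = Mx w := by
  rw [theW]; simp [h]

lemma theW_singleton (x : Ordinal.{0}) : theW {x} = x := by
  rw [theW_small (by simp)]
  simp [Mx]

lemma theW_big {w : Finset Ordinal.{0}} (h : 2 ≤ w.card) : theW w = theW (nxt w) := by
  rw [theW]; simp [h]

end NPrPf

namespace NPrPf
open Ordinal

lemma theW_pair {a b : Ordinal.{0}} (h : a < b) : theW {a, b} = ee b a := by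
  have hab : a ≠ b := ne_of_lt h
  have hMx : Mx {a, b} = b := by
    rw [show ({a, b} : Finset Ordinal.{0}) = insert a {b} from rfl, Mx_insert_of_lt, Mx]
    · simp
    · simpa [Mx] using h
  have hcard : 2 ≤ ({a, b} : Finset Ordinal.{0}).card := by
    rw [Finset.card_insert_of_notMem (by simp [hab])]; simp
  rw [theW_big hcard, nxt, hMx]
  have : ({a, b} : Finset Ordinal.{0}).erase b = {a} := by
    rw [show ({a, b} : Finset Ordinal.{0}) = insert a {b} from rfl,
      Finset.erase_insert_of_ne hab]
    simp
  rw [this, Finset.image_singleton, theW_singleton]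

/-- K3a : adding one parallel element. -/
lemma theW_insert : ∀ (n : ℕ) (u : Finset Ordinal.{0}), u.card = n →
    ∀ a, a ∉ u → Par u a → theW (insert a u) = dc u a := by
  intro n
  induction n using Nat.strong_induction_on with
  | _ n IH =>
    intro u hcard a ha hpar
    rcases Finset.eq_empty_or_nonempty u with rfl | hu
    · rw [show insert a (∅ : Finset Ordinal.{0}) = {a} from rfl, theW_singleton, dc_empty]
    · have hlt : a < Mx u := ((Par_iff hu a).mp hpar).1
      have hpar' : Par (nxt u) (ee (Mx u) a) := ((Par_iff hu a).mp hpar).2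
      have hucard : 0 < u.card := Finset.card_pos.mpr hu
      have hbig : 2 ≤ (insert a u).card := by
        rw [Finset.card_insert_of_notMem ha]; omega
      rw [theW_big hbig, nxt_insert ha hlt,
        IH (nxt u).card (by rw [card_nxt hu]; omega) (nxt u) rfl _
          (ee_Mx_not_mem_nxt ha hlt) hpar', dc_eq hu]

/-- K3b : adding two parallel elements. -/
lemma theW_insert2 : ∀ (n : ℕ) (u : Finset Ordinal.{0}), u.card = n →
    ∀ a b, a ∉ u → b ∉ u → a ≠ b → Par u a → Par u b →
    theW (insert a (insert b u)) =
      ee (max (dc u a) (dc u b)) (min (dc u a) (dc u b)) := by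
  intro n
  induction n using Nat.strong_induction_on with
  | _ n IH =>
    intro u hcard a b ha hb hab hpa hpb
    rcases Finset.eq_empty_or_nonempty u with rfl | hu
    · rw [dc_empty, dc_empty]
      rcases lt_or_gt_of_ne hab with h | h
      · rw [max_eq_right h.le, min_eq_left h.le]
        rw [show insert a (insert b (∅ : Finset Ordinal.{0})) = {a, b} from rfl]
        exact theW_pair h
      · rw [max_eq_left h.le, min_eq_right h.le]
        rw [show insert a (insert b (∅ : Finset Ordinal.{0})) = {a, b} from rfl,
          Finset.pair_comm a b]
        exact theW_pair h
    · have hpa' := (Par_iff hu a).mp hpa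
      have hpb' := (Par_iff hu b).mp hpb
      have hMxb : Mx (insert b u) = Mx u := Mx_insert_of_lt hpb'.1
      have hanb : a ∉ insert b u := by
        simp only [Finset.mem_insert]; push_neg; exact ⟨hab, ha⟩
      have h1 : nxt (insert a (insert b u)) =
          insert (ee (Mx u) a) (insert (ee (Mx u) b) (nxt u)) := by
        rw [nxt_insert hanb (by rw [hMxb]; exact hpa'.1), hMxb, nxt_insert hb hpb'.1]
      have hucard : 0 < u.card := Finset.card_pos.mpr hu
      have hbig : 2 ≤ (insert a (insert b u)).card := by
        have := Finset.card_insert_le b u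
        have h2 := Finset.card_insert_of_notMem hanb
        have h3 := Finset.card_insert_of_notMem hb
        omega
      have heab : ee (Mx u) a ≠ ee (Mx u) b := fun he => hab (ee_injOn hpa'.1 hpb'.1 he)
      rw [theW_big hbig, h1,
        IH (nxt u).card (by rw [card_nxt hu]; omega) (nxt u) rfl _ _
          (ee_Mx_not_mem_nxt ha hpa'.1) (ee_Mx_not_mem_nxt hb hpb'.1) heab hpa'.2 hpb'.2,
        ← dc_eq hu, ← dc_eq hu]

/-- K6 : injectivity of the deep code. -/
lemma dc_injOn : ∀ (n : ℕ) (u : Finset Ordinal.{0}), u.card = n →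
    ∀ a b, Par u a → Par u b → a ≠ b → dc u a ≠ dc u b := by
  intro n
  induction n using Nat.strong_induction_on with
  | _ n IH =>
    intro u hcard a b hpa hpb hab
    rcases Finset.eq_empty_or_nonempty u with rfl | hu
    · rw [dc_empty, dc_empty]; exact hab
    · have hpa' := (Par_iff hu a).mp hpa
      have hpb' := (Par_iff hu b).mp hpb
      have hucard : 0 < u.card := Finset.card_pos.mpr hu
      rw [dc_eq hu, dc_eq hu]
      exact IH (nxt u).card (by rw [card_nxt hu]; omega) (nxt u) rfl _ _
        hpa'.2 hpb'.2 (fun he => hab (ee_injOn hpa'.1 hpb'.1 he))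

/-- K5 : the survivor element. -/
lemma exists_survivor : ∀ (n : ℕ) (w : Finset Ordinal.{0}), w.card = n → w.Nonempty →
    ∃ x ∈ w, Par (w.erase x) x := by
  intro n
  induction n using Nat.strong_induction_on with
  | _ n IH =>
    intro w hcard hw
    rcases le_or_gt w.card 1 with h1 | h1
    · obtain ⟨x, rfl⟩ := Finset.card_eq_one.mp (le_antisymm h1 (Finset.card_pos.mpr hw))
      exact ⟨x, Finset.mem_singleton_self x, by rw [Finset.erase_singleton]; exact Par_empty x⟩
    · have hw2 : 2 ≤ w.card := h1
      have hnn : (nxt w).Nonempty := nxt_nonempty hw2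
      obtain ⟨y, hy, hpary⟩ := IH (nxt w).card
        (by rw [card_nxt hw]; omega) (nxt w) rfl hnn
      obtain ⟨x₀, hx₀u, hx₀lt, rfl⟩ := mem_of_mem_nxt hy
      have hx₀ne : x₀ ≠ Mx w := ne_of_lt hx₀lt
      refine ⟨x₀, hx₀u, ?_⟩
      have herase_ne : (w.erase x₀).Nonempty :=
        ⟨Mx w, Finset.mem_erase.mpr ⟨(Ne.symm hx₀ne), Mx_mem hw⟩⟩
      have hMxe : Mx (w.erase x₀) = Mx w := Mx_erase hx₀u hx₀ne
      rw [Par_iff herase_ne, hMxe]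
      refine ⟨hx₀lt, ?_⟩
      have hnxt_erase : nxt (w.erase x₀) = (nxt w).erase (ee (Mx w) x₀) := by
        rw [nxt, hMxe, Finset.erase_right_comm, nxt]
        refine image_erase_injOn ?_ (ee_injOn (t := Mx w)) ?_
        · intro z hz
          obtain ⟨hzne, hzu⟩ := Finset.mem_erase.mp hz
          exact lt_Mx_of_ne hzu hzne
        · exact Finset.mem_erase.mpr ⟨hx₀ne, hx₀u⟩
      rw [hnxt_erase]
      exact hpary

noncomputable def nu (w : Finset Ordinal.{0}) : Ordinal.{0} := cc (theW w)

/-- K4 : bound of nu. -/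
lemma nu_le : ∀ (n : ℕ) (w : Finset Ordinal.{0}), w.card = n → w.Nonempty →
    nu w ≤ cc (Mx w) := by
  intro n
  induction n using Nat.strong_induction_on with
  | _ n IH =>
    intro w hcard hw
    rcases le_or_gt 2 w.card with h2 | h2
    · have hnn : (nxt w).Nonempty := nxt_nonempty h2
      have : nu w = nu (nxt w) := by rw [nu, nu, theW_big h2]
      rw [this]
      refine (IH (nxt w).card (by rw [card_nxt hw]; omega) (nxt w) rfl hnn).trans ?_
      exact cc_le_of_lt_ord (nxt_lt_ord (Mx_mem hnn))
    · rw [nu, theW_small (by omega)]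

end NPrPf

namespace NPrPf
open Ordinal FirstOrder Language

variable (A : Ordinal.{0})

/-- the universe ordinal -/
noncomputable abbrev OO : Ordinal.{0} := (aleph A).ord

/-- the universe type -/
noncomputable abbrev MM : Type := (OO A).ToType

noncomputable def rho : MM A → Ordinal.{0} := fun x => ((ToType.mk (o := OO A)).symm x : Ordinal)

lemma rho_lt (x : MM A) : rho A x < OO A := ((ToType.mk (o := OO A)).symm x).2

lemma rho_inj : Function.Injective (rho A) := fun x y h =>
  (ToType.mk (o := OO A)).symm.injective (Subtype.ext h)

/-- level index type -/
noncomputable abbrev II : Type := A.ToType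

noncomputable def gam : II A → Ordinal.{0} := fun i => ((ToType.mk (o := A)).symm i : Ordinal)

lemma gam_lt (i : II A) : gam A i < A := ((ToType.mk (o := A)).symm i).2

lemma gam_surj {γ : Ordinal.{0}} (h : γ < A) : ∃ i, gam A i = γ := by
  refine ⟨ToType.mk (o := A) ⟨γ, h⟩, ?_⟩
  rw [gam, OrderIso.symm_apply_apply]

/-- the language -/
def Lg : Language where
  Functions _ := Empty
  Relations n := (Fin n × II A) ⊕ (Fin n × Fin n)

noncomputable def uset1 {n : ℕ} (b : Fin n → MM A) (k : Fin n) : Finset Ordinal.{0} :=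
  (Finset.univ.erase k).image (fun j => rho A (b j))

noncomputable def uset2 {n : ℕ} (b : Fin n → MM A) (k k' : Fin n) : Finset Ordinal.{0} :=
  ((Finset.univ.erase k).erase k').image (fun j => rho A (b j))

def SCond (γ : Ordinal.{0}) (u : Finset Ordinal.{0}) (a : Ordinal.{0}) : Prop :=
  Par u a ∧ cc (dc u a) ≤ γ

def VCond (u : Finset Ordinal.{0}) (a b : Ordinal.{0}) : Prop :=
  Par u a ∧ Par u b ∧ dc u a < dc u b

noncomputable def Str : (Lg A).Structure (MM A) where
  funMap := fun f _ => f.elim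
  RelMap := fun r b => match r with
    | .inl (k, i) => SCond (gam A i) (uset1 A b k) (rho A (b k))
    | .inr (k, k') => VCond (uset2 A b k k') (rho A (b k)) (rho A (b k'))

/-- the S-formula -/
def Sform {n : ℕ} (k : Fin n) (i : II A) : (Lg A).Formula (Fin n) :=
  Relations.formula (L := Lg A) (Sum.inl (k, i)) (fun j => Term.var j)

/-- the V-formula -/
def Vform {n : ℕ} (k k' : Fin n) : (Lg A).Formula (Fin n) :=
  Relations.formula (L := Lg A) (Sum.inr (k, k')) (fun j => Term.var j)

lemma Sform_isQF {n : ℕ} (k : Fin n) (i : II A) : (Sform A k i).IsQF :=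
  (BoundedFormula.IsAtomic.rel _ _).isQF

lemma Vform_isQF {n : ℕ} (k k' : Fin n) : (Vform A k k').IsQF :=
  (BoundedFormula.IsAtomic.rel _ _).isQF

lemma Sform_realize {n : ℕ} (k : Fin n) (i : II A) (v : Fin n → MM A) :
    @Formula.Realize (Lg A) (MM A) (Str A) _ (Sform A k i) v ↔
      SCond (gam A i) (uset1 A v k) (rho A (v k)) := by
  letI : (Lg A).Structure (MM A) := Str A
  exact Iff.rfl

lemma Vform_realize {n : ℕ} (k k' : Fin n) (v : Fin n → MM A) :
    @Formula.Realize (Lg A) (MM A) (Str A) _ (Vform A k k') v ↔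
      VCond (uset2 A v k k') (rho A (v k)) (rho A (v k')) := by
  letI : (Lg A).Structure (MM A) := Str A
  exact Iff.rfl

end NPrPf

namespace NPrPf
open Ordinal FirstOrder Language

section enumlemmas
variable {Mo : Type} [LinearOrder Mo]

lemma enumFun_mem (w : Finset Mo) (j : Fin w.card) : enumFun w j ∈ w :=
  (w.orderIsoOfFin rfl j).2

lemma enumFun_inj (w : Finset Mo) : Function.Injective (enumFun w) := fun a b h =>
  (w.orderIsoOfFin rfl).injective (Subtype.ext h)

noncomputable def pos (w : Finset Mo) (x : Mo) (hx : x ∈ w) : Fin w.card :=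
  (w.orderIsoOfFin rfl).symm ⟨x, hx⟩

lemma enumFun_pos (w : Finset Mo) (x : Mo) (hx : x ∈ w) : enumFun w (pos w x hx) = x :=
  congrArg Subtype.val ((w.orderIsoOfFin rfl).apply_symm_apply ⟨x, hx⟩)

lemma enumFun_surj (w : Finset Mo) {y : Mo} (hy : y ∈ w) : ∃ j, enumFun w j = y :=
  ⟨pos w y hy, enumFun_pos w y hy⟩

end enumlemmas

variable (A : Ordinal.{0})

lemma uset1_enum (w : Finset (MM A)) (k : Fin w.card) :
    uset1 A (enumFun w) k = (w.image (rho A)).erase (rho A (enumFun w k)) := by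
  ext ζ
  simp only [uset1, Finset.mem_image, Finset.mem_erase, Finset.mem_univ, and_true]
  constructor
  · rintro ⟨j, hjk, rfl⟩
    refine ⟨fun he => hjk (enumFun_inj w (rho_inj A he)), ?_⟩
    exact ⟨enumFun w j, enumFun_mem w j, rfl⟩
  · rintro ⟨hne, y, hy, rfl⟩
    obtain ⟨j, rfl⟩ := enumFun_surj w hy
    exact ⟨j, fun he => hne (by rw [he]), rfl⟩

lemma uset2_enum (w : Finset (MM A)) (k k' : Fin w.card) :
    uset2 A (enumFun w) k k' =
      ((w.image (rho A)).erase (rho A (enumFun w k))).erase (rho A (enumFun w k')) := by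
  ext ζ
  simp only [uset2, Finset.mem_image, Finset.mem_erase, Finset.mem_univ, and_true]
  constructor
  · rintro ⟨j, ⟨hjk', hjk⟩, rfl⟩
    exact ⟨fun he => hjk' (enumFun_inj w (rho_inj A he)),
      fun he => hjk (enumFun_inj w (rho_inj A he)),
      enumFun w j, enumFun_mem w j, rfl⟩
  · rintro ⟨hne', hne, y, hy, rfl⟩
    obtain ⟨j, rfl⟩ := enumFun_surj w hy
    exact ⟨j, ⟨fun he => hne' (by rw [he]), fun he => hne (by rw [he])⟩, rfl⟩

lemma uset1_update (w : Finset (MM A)) (k : Fin w.card) (x : MM A) :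
    uset1 A (Function.update (enumFun w) k x) k = uset1 A (enumFun w) k := by
  unfold uset1
  refine Finset.image_congr ?_
  intro j hj
  simp only [Function.update_of_ne (Finset.mem_erase.mp hj).1]

lemma uset2_update (w : Finset (MM A)) (k k' : Fin w.card) (x : MM A) :
    uset2 A (Function.update (enumFun w) k x) k k' = uset2 A (enumFun w) k k' := by
  unfold uset2
  refine Finset.image_congr ?_
  intro j hj
  have hjk : j ≠ k := (Finset.mem_erase.mp (Finset.mem_erase.mp hj).2).1
  simp only [Function.update_of_ne hjk]

/-- unfolding of rkGe -/
lemma rkGe_zero {L : Language} {M : Type} [LinearOrder M] [L.Structure M] :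
    rkGe L M 0 = rkBase L M :=
  Ordinal.limitRecOn_zero _ _ _

lemma rkGe_succ {L : Language} {M : Type} [LinearOrder M] [L.Structure M] (ε : Ordinal) :
    rkGe L M (Order.succ ε) = rkSucc L M (rkGe L M ε) :=
  Ordinal.limitRecOn_succ _ _ _ _

lemma rkGe_limit {L : Language} {M : Type} [LinearOrder M] [L.Structure M] {δ : Ordinal}
    (h : Order.IsSuccLimit δ) : rkGe L M δ = fun w => ∀ γ (_ : γ < δ), rkGe L M γ w :=
  Ordinal.limitRecOn_limit _ _ _ _ h

end NPrPf

namespace NPrPf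
open Ordinal FirstOrder Language

variable (A : Ordinal.{0})

lemma countable_dcSet (u : Finset Ordinal.{0}) (B : Ordinal.{0}) (hB : cc B ≤ 0)
    (S : Set (MM A)) (hS : ∀ x ∈ S, Par u (rho A x) ∧ dc u (rho A x) < B) :
    S.Countable := by
  have hccB : cc B = 0 := le_antisymm hB zero_le
  have hcard : B.card ≤ ℵ₀ := by
    have h := card_le_aleph_cc B
    rwa [hccB, aleph_zero] at h
  haveI : Countable ↥(Set.Iio B) := by
    rw [← Cardinal.mk_le_aleph0_iff, Ordinal.mk_Iio_ordinal]
    calc Cardinal.lift.{1} B.card ≤ Cardinal.lift.{1} ℵ₀ := Cardinal.lift_le.mpr hcard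
      _ = ℵ₀ := Cardinal.lift_aleph0
  rw [← Set.countable_coe_iff]
  have hinj : Function.Injective
      (fun x : S => (⟨dc u (rho A x.1), (hS x.1 x.2).2⟩ : Set.Iio B)) := by
    intro x y hxy
    have hdc : dc u (rho A x.1) = dc u (rho A y.1) := congrArg Subtype.val hxy
    by_contra hne
    have hxyne : x.1 ≠ y.1 := fun he => hne (Subtype.ext he)
    have hrne : rho A x.1 ≠ rho A y.1 := fun he => hxyne (rho_inj A he)
    exact dc_injOn u.card u rfl _ _ (hS x.1 x.2).1 (hS y.1 y.2).1 hrne hdc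
  exact hinj.countable

lemma refuteBase (T : Finset (MM A)) (y z : MM A) (hy : y ∈ T) (hz : z ∈ T) (hyz : y ≠ z)
    (u : Finset Ordinal.{0})
    (hu : ((T.image (rho A)).erase (rho A y)).erase (rho A z) = u)
    (hpy : Par u (rho A y)) (hpz : Par u (rho A z))
    (hlt : dc u (rho A y) < dc u (rho A z)) (hccz : cc (dc u (rho A z)) ≤ 0) :
    ¬ @rkBase (Lg A) (MM A) _ (Str A) T := by
  intro hbase
  set k := pos T y hy with hk
  set k' := pos T z hz with hk'
  have hkk' : k' ≠ k := by
    intro he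
    exact hyz ((enumFun_pos T y hy) ▸ (enumFun_pos T z hz) ▸ (by rw [← hk, ← hk', he]))
  have hreal : @Formula.Realize (Lg A) (MM A) (Str A) _ (Vform A k k') (enumFun T) := by
    rw [Vform_realize, uset2_enum, enumFun_pos, enumFun_pos, hu]
    exact ⟨hpy, hpz, hlt⟩
  have hncount := hbase (Vform A k k') (Vform_isQF A k k') k hreal
  apply hncount
  have hset : {x : MM A | @Formula.Realize (Lg A) (MM A) (Str A) _ (Vform A k k')
      (Function.update (enumFun T) k x)} =
      {x : MM A | VCond u (rho A x) (rho A z)} := by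
    ext x
    rw [Set.mem_setOf_eq, Set.mem_setOf_eq, Vform_realize, uset2_update, uset2_enum,
      Function.update_self, Function.update_of_ne hkk', enumFun_pos, enumFun_pos, hu]
  rw [hset]
  exact countable_dcSet A u (dc u (rho A z)) hccz _ (fun x hx => ⟨hx.1, hx.2.2⟩)

end NPrPf

namespace NPrPf
open Ordinal FirstOrder Language

variable (A : Ordinal.{0})

lemma mem_image_rho {w : Finset (MM A)} {x : MM A} (h : rho A x ∈ w.image (rho A)) : x ∈ w := by
  obtain ⟨y, hy, he⟩ := Finset.mem_image.mp h
  exact (rho_inj A he) ▸ hy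

lemma Mx_lt_OO {W : Finset Ordinal.{0}} (hW : W.Nonempty)
    (hsub : ∀ ζ ∈ W, ζ < OO A) : Mx W < OO A := hsub _ (Mx_mem hW)

lemma main_claim (hA1 : 1 ≤ A) :
    ∀ δ (w : Finset (MM A)), w.Nonempty → @rkGe (Lg A) (MM A) _ (Str A) δ w →
      δ ≤ nu (w.image (rho A)) := by
  letI : (Lg A).Structure (MM A) := Str A
  intro δ
  induction δ using Ordinal.limitRecOn with
  | zero =>
    intro w hw _
    exact zero_le
  | add_one ε IH =>
    intro w hw hrk
    rw [Ordinal.add_one_eq_succ, rkGe_succ] at hrk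
    by_contra hcon
    set W := w.image (rho A) with hWdef
    have hνε : nu W ≤ ε := Order.lt_succ_iff.mp (not_le.mp hcon)
    have hWne : W.Nonempty := hw.image _
    obtain ⟨x, hxW, hparx⟩ := exists_survivor W.card W rfl hWne
    obtain ⟨ξ, hξw, hρξ⟩ := Finset.mem_image.mp hxW
    set u := W.erase x with hudef
    have hWx : insert x u = W := Finset.insert_erase hxW
    have hxu : x ∉ u := Finset.notMem_erase x W
    have hdcξ : dc u x = theW W := by
      rw [← theW_insert u.card u rfl x hxu hparx, hWx]
    have hγlt : nu W < A := by
      refine (nu_le W.card W rfl hWne).trans_lt (cc_lt_of_lt_ord hA1 ?_)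
      refine Mx_lt_OO A hWne (fun ζ hζ => ?_)
      obtain ⟨y, _, rfl⟩ := Finset.mem_image.mp hζ
      exact rho_lt A y
    obtain ⟨i, hi⟩ := gam_surj A hγlt
    set k := pos w ξ hξw with hkdef
    have hreal : @Formula.Realize (Lg A) (MM A) (Str A) _ (Sform A k i) (enumFun w) := by
      rw [Sform_realize, uset1_enum, enumFun_pos, hρξ]
      exact ⟨hparx, by rw [hdcξ]; exact le_of_eq (hi ▸ rfl)⟩
    obtain ⟨ax, haxw, hrkax, hupd⟩ := hrk (Sform A k i) (Sform_isQF A k i) k hreal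
    rw [Sform_realize, uset1_update, uset1_enum, enumFun_pos, hρξ,
      Function.update_self] at hupd
    obtain ⟨hparax, hccax⟩ := hupd
    have haxW : rho A ax ∉ W := fun h => haxw (mem_image_rho A h)
    have haxne : rho A ax ≠ x := by
      rw [← hρξ]
      exact fun he => haxw ((rho_inj A he) ▸ hξw)
    have haxu : rho A ax ∉ u := fun h => haxW (Finset.erase_subset _ _ h)
    have hTimg : (insert ax w).image (rho A) = insert (rho A ax) W :=
      Finset.image_insert _ _ _
    set Ac := dc u (rho A ax) with hAcdef
    set Bc := dc u x with hBcdef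
    have hABne : Ac ≠ Bc := dc_injOn u.card u rfl _ _ hparax hparx haxne
    have hnuT : nu ((insert ax w).image (rho A)) = cc (ee (max Ac Bc) (min Ac Bc)) := by
      rw [hTimg, ← hWx, nu, theW_insert2 u.card u rfl _ _ haxu hxu haxne hparax hparx]
    have hccB : cc Bc = gam A i := by rw [hdcξ, hi]; rfl
    have hccP : cc (max Ac Bc) ≤ gam A i := by
      rcases max_cases Ac Bc with ⟨hmax, _⟩ | ⟨hmax, _⟩
      · rw [hmax]; exact hccax
      · rw [hmax, hccB]
    have hminmax : min Ac Bc < max Ac Bc := min_lt_max.mpr hABne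
    have hνT : nu ((insert ax w).image (rho A)) < max (gam A i) 1 := by
      rw [hnuT]
      exact (cc_lt_max (ee_lt_ord hminmax)).trans_le (max_le_max hccP le_rfl)
    have hγε : gam A i ≤ ε := by rw [hi]; exact hνε
    rcases eq_or_ne ε 0 with rfl | hεne
    · -- ε = 0 : refute rkBase of T
      have hγ0 : gam A i = 0 := le_antisymm hγε zero_le
      have hcc0 : cc (max Ac Bc) ≤ 0 := hγ0 ▸ hccP
      rw [rkGe_zero] at hrkax
      have hξT : ξ ∈ insert ax w := Finset.mem_insert_of_mem hξw
      have haxT : ax ∈ insert ax w := Finset.mem_insert_self ax w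
      have haxξ : ax ≠ ξ := fun he => haxw (he ▸ hξw)
      rcases lt_or_gt_of_ne hABne with hlt | hlt
      · -- Ac < Bc : vary ax, bound ξ
        refine refuteBase A (insert ax w) ax ξ haxT hξT haxξ u ?_ hparax (hρξ ▸ hparx)
          (by rw [hρξ]; exact hlt) ?_ hrkax
        · rw [hTimg, Finset.erase_insert haxW, hρξ]
        · rw [hρξ]
          rw [max_eq_right hlt.le] at hcc0
          exact hcc0
      · -- Bc < Ac : vary ξ, bound ax
        refine refuteBase A (insert ax w) ξ ax hξT haxT haxξ.symm u ?_ (hρξ ▸ hparx) hparax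
          (by rw [hρξ]; exact hlt) ?_ hrkax
        · rw [hTimg, hρξ, Finset.erase_insert_of_ne haxne, Finset.erase_insert haxu]
        · rw [max_eq_left hlt.le] at hcc0
          exact hcc0
    · -- ε ≥ 1
      have hε1 : 1 ≤ ε := Ordinal.one_le_iff_ne_zero.mpr hεne
      have hlt : nu ((insert ax w).image (rho A)) < ε :=
        hνT.trans_le (max_le (hγε) hε1)
      exact absurd (IH (insert ax w) (Finset.insert_nonempty _ _) hrkax) (not_le.mpr hlt)
  | limit δ hδ IH =>
    intro w hw hrk
    rw [rkGe_limit hδ] at hrk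
    by_contra hcon
    have h1 : nu (w.image (rho A)) < δ := not_le.mp hcon
    have h2 := hδ.succ_lt h1
    have := IH _ h2 w hw (hrk _ h2)
    exact absurd this (by simp [Order.succ_le_iff])

end NPrPf

namespace NPrPf
open Ordinal FirstOrder Language

variable (A : Ordinal.{0})

lemma card_Lg (hA : A < (aleph 1).ord) : (Lg A).card ≤ ℵ₀ := by
  have hAcard : A.card ≤ ℵ₀ := by
    have h := Cardinal.lt_ord.mp hA
    rw [show (1 : Ordinal) = Order.succ 0 from (Ordinal.succ_zero).symm, aleph_succ,
      aleph_zero] at h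
    exact Order.lt_succ_iff.mp h
  haveI : Countable (II A) :=
    Cardinal.mk_le_aleph0_iff.mp (by rw [Cardinal.mk_toType]; exact hAcard)
  haveI hf : ∀ l : ℕ, Countable ((Lg A).Functions l) := fun _ =>
    (inferInstance : Countable Empty)
  haveI hr : ∀ l : ℕ, Countable ((Lg A).Relations l) := fun l =>
    (inferInstance : Countable ((Fin l × II A) ⊕ (Fin l × Fin l)))
  haveI : Countable ((Lg A).Symbols) := by
    unfold Language.Symbols
    infer_instance
  exact Cardinal.mk_le_aleph0

lemma one_add_le {d b : Ordinal.{0}} (h : d < b) : 1 + d ≤ b := by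
  rcases lt_or_ge d ω with hd | hd
  · obtain ⟨n, rfl⟩ := Ordinal.lt_omega0.mp hd
    rw [Ordinal.one_add_natCast]
    show ((n + 1 : ℕ) : Ordinal) ≤ b
    push_cast
    rw [Ordinal.add_one_eq_succ, Order.succ_le_iff]
    exact h
  · rw [Ordinal.one_add_of_omega0_le hd]
    exact h.le

lemma noRk0 : ∀ δ (w : Finset ℕ), w.Nonempty →
    @rkGe Language.empty ℕ _ Language.emptyStructure δ w → False := by
  letI : Language.empty.Structure ℕ := Language.emptyStructure
  have base : ∀ (w : Finset ℕ), w.Nonempty → ¬ rkBase Language.empty ℕ w := by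
    intro w hw hrk
    have k : Fin w.card := ⟨0, Finset.card_pos.mpr hw⟩
    refine hrk (Term.equal (Term.var k) (Term.var k))
      ((BoundedFormula.IsAtomic.equal _ _).isQF) k ?_ ?_
    · rw [Formula.realize_equal]
    · exact Set.to_countable _
  intro δ
  induction δ using Ordinal.limitRecOn with
  | zero =>
    intro w hw hrk
    rw [rkGe_zero] at hrk
    exact base w hw hrk
  | add_one ε IH =>
    intro w hw hrk
    rw [Ordinal.add_one_eq_succ, rkGe_succ] at hrk
    have k : Fin w.card := ⟨0, Finset.card_pos.mpr hw⟩
    obtain ⟨a, _, hrk', _⟩ := hrk (Term.equal (Term.var k) (Term.var k))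
      ((BoundedFormula.IsAtomic.equal _ _).isQF) k (by rw [Formula.realize_equal])
    exact IH (insert a w) (Finset.insert_nonempty _ _) hrk'
  | limit δ hδ IH =>
    intro w hw hrk
    rw [rkGe_limit hδ] at hrk
    exact IH 0 hδ.pos w hw (hrk 0 hδ.pos)

end NPrPf

open NPrPf in
/-- For every countable ordinal `α`, `NPr^α(ℵ_α)` holds. -/
theorem stmt_9 (α : Ordinal) (hα : α < (Cardinal.aleph 1).ord) :
    NPr α (Cardinal.aleph α) := by
  rcases eq_or_ne α 0 with rfl | hne
  · refine ⟨ℕ, inferInstance, Language.empty, Language.emptyStructure, ?_, ?_, ?_⟩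
    · rw [Cardinal.aleph_zero, Cardinal.mk_nat]
    · rw [Language.card_empty]
      exact le_of_lt Cardinal.aleph0_pos
    · intro w hw δ hrk
      exact absurd hrk (fun h => noRk0 δ w hw h)
  · have hA1 : 1 ≤ α := Ordinal.one_le_iff_ne_zero.mpr hne
    refine ⟨MM α, inferInstance, Lg α, Str α, Cardinal.mk_ord_toType _, card_Lg α hα, ?_⟩
    intro w hw δ hrk
    have h := main_claim α hA1 δ w hw hrk
    have h2 : nu (w.image (rho α)) < α := by
      refine (nu_le _ _ rfl (hw.image _)).trans_lt (cc_lt_of_lt_ord hA1 ?_)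
      refine Mx_lt_OO α (hw.image _) (fun ζ hζ => ?_)
      obtain ⟨y, _, rfl⟩ := Finset.mem_image.mp hζ
      exact rho_lt α y
    calc 1 + δ ≤ 1 + nu (w.image (rho α)) := add_le_add_right h 1
      _ ≤ α := one_add_le h2
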